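/- Let (Ω(S),T) be a minimal, aperiodic, nonprimitive substitution dynamical system over {a,b} with |S(a)|>1 and S(b)=b, and suppose aa does not occur in S(a). Then there exists L∈ℕ such that for every v∈W(S), all 1-partitions of v induce the same 1-partition on the middle part v(L)⋯v(|v|−L). -/

import Mathlib

open List Filter Topology MeasureTheory

namespace SubstLR

variable {A : Type*}

/-- Apply the substitution `S` to a finite word. -/
def subst (S : A → List A) (w : List A) : List A := w.flatMap S

/-- `iter S n w` is `S^n(w)`. -/
def iter (S : A → List A) (n : ℕ) (w : List A) : List A := (subst S)^[n] w

/-- The set `W(S)` of finite words associated to `S`. -/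
def WS (S : A → List A) : Set (List A) := {w | ∃ (a : A) (n : ℕ), w <:+: iter S n [a]}

/-- `w` is a finite factor of the two-sided infinite word `ω`. -/
def IsFactor (w : List A) (ω : ℤ → A) : Prop :=
  ∃ k : ℤ, w = (List.range w.length).map fun i => ω (k + i)

/-- The subshift `Ω(S)` associated to `S`. -/
def OmegaS (S : A → List A) : Set (ℤ → A) := {ω | ∀ w, IsFactor w ω → w ∈ WS S}

/-- The set `W(Ω(S))` of finite factors of elements of `Ω(S)`. -/
def WOmega (S : A → List A) : Set (List A) := {w | ∃ ω ∈ OmegaS S, IsFactor w ω}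

/-- Condition (ℓ): `|S^n(e)| → ∞`. -/
def CondL (S : A → List A) (e : A) : Prop :=
  Tendsto (fun n => (iter S n [e]).length) atTop atTop

/-- Condition (o): every letter occurs in some `S^n(e)`. -/
def CondO (S : A → List A) (e : A) : Prop := ∀ a : A, ∃ n : ℕ, a ∈ iter S n [e]

/-- Condition (c): `W(S) = W(Ω(S))`. -/
def CondC (S : A → List A) : Prop := WS S = WOmega S

/-- `(Ω(S),T)` is a substitution dynamical system. -/
def IsSubstSystem (S : A → List A) : Prop := (∃ e, CondL S e ∧ CondO S e) ∧ CondC S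

/-- `v` occurs with bounded gaps in the set of words `W`. -/
def BddGaps (v : List A) (W : Set (List A)) : Prop :=
  ∃ L : ℕ, 0 < L ∧ ∀ w ∈ W, L ≤ w.length → v <:+: w

/-- Condition (BG) for the letter `e`. -/
def BG (S : A → List A) (e : A) : Prop := CondL S e ∧ CondO S e ∧ BddGaps [e] (WS S)

/-- The shift by `k`; `shift 1` is the map `T`. -/
def shift (k : ℤ) (ω : ℤ → A) : ℤ → A := fun n => ω (n + k)

/-- `(Ω(S),T)` is minimal: every orbit is dense in `Ω(S)`. -/
def Minimal [TopologicalSpace A] (S : A → List A) : Prop :=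
  ∀ ω ∈ OmegaS S, OmegaS S ⊆ closure {ω' | ∃ k : ℤ, ω' = shift k ω}

/-- `(Ω(S),T)` is linearly repetitive. -/
def LinRep (S : A → List A) : Prop :=
  ∃ C : ℝ, 0 < C ∧ ∀ v ∈ WS S, ∀ w ∈ WS S, C * v.length ≤ (w.length : ℝ) → v <:+: w

/-- `(Ω(S),T)` is aperiodic. -/
def Aperiodic (S : A → List A) : Prop :=
  ∀ ω ∈ OmegaS S, ∀ k : ℤ, k ≠ 0 → shift k ω ≠ ω

/-- The set `B` of letters `a` with `limsup |S^n(a)| < ∞`. -/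
def Bset (S : A → List A) : Set A := {a | ∃ M : ℕ, ∀ n, (iter S n [a]).length ≤ M}

/-- The set `C = A ∖ B`. -/
def Cset (S : A → List A) : Set A := (Bset S)ᶜ

open Classical in
/-- `tilde S w` is the word obtained from `w` by deleting all letters of `B`. -/
noncomputable def tilde (S : A → List A) (w : List A) : List A :=
  w.filter fun x => decide (x ∈ Cset S)

/-- The induced substitution `S̃`. -/
noncomputable def tildeS (S : A → List A) : A → List A := fun x => tilde S (S x)


/-- A 1-partition of a finite word `w`: `w = z₀ z₁ ⋯ z_n z_{n+1}` with `z₁,…,z_n ∈ {S(a), b}`,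
`z₀` a suffix of an element of `{S(a), b}` and `z_{n+1}` a prefix of such an element. -/
def IsOnePart (S : A → List A) (a b : A) (w z0 : List A) (zs : List (List A))
    (zl : List A) : Prop :=
  w = z0 ++ zs.flatten ++ zl ∧
  (∃ x ∈ ({S a, [b]} : Set (List A)), z0 <:+ x) ∧
  (∀ z ∈ zs, z ∈ ({S a, [b]} : Set (List A))) ∧
  (∃ x ∈ ({S a, [b]} : Set (List A)), zl <+: x)

/-- The set of cut positions of a 1-partition of a finite word. -/
def cuts (z0 : List A) (zs : List (List A)) : Set ℕ :=
  {p | ∃ i ≤ zs.length, p = z0.length + ((zs.take i).flatten).length}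

/-- `S` is primitive. -/
def Primitive (S : A → List A) : Prop := ∃ r : ℕ, 0 < r ∧ ∀ x y : A, y ∈ iter S r [x]

set_option linter.unusedSectionVars false
set_option linter.unusedVariables false

section PartC
variable [DecidableEq A]

/-- position of the `i`-th cut -/
def pos (z0 : List A) (zs : List (List A)) (i : ℕ) : ℕ :=
  z0.length + ((zs.take i).flatten).length

/-- number of occurrences of `a` among the first `x` letters of `v` -/
def cnt (a : A) (v : List A) (x : ℕ) : ℕ := ((v.take x).count a)

/-- `c` is the starting position of an `S a`-block -/
def UB (S : A → List A) (a : A) (z0 : List A) (zs : List (List A)) (c : ℕ) : Prop :=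
  ∃ i, ∃ h : i < zs.length, pos z0 zs i = c ∧ zs[i] = S a

variable {S : A → List A} {a b : A} {v z0 zl : List A} {zs : List (List A)}

theorem flatten_take_succ {zs : List (List A)} {i : ℕ} (h : i < zs.length) :
    (zs.take (i+1)).flatten = (zs.take i).flatten ++ zs[i] := by
  rw [← List.take_concat_get' zs i h, List.flatten_append]; simp

theorem pos_succ {i : ℕ} (h : i < zs.length) :
    pos z0 zs (i+1) = pos z0 zs i + zs[i].length := by
  unfold pos
  rw [flatten_take_succ h]
  simp [Nat.add_assoc]

theorem pos_le_succ (z0 : List A) (zs : List (List A)) (i : ℕ) :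
    pos z0 zs i ≤ pos z0 zs (i+1) := by
  by_cases h : i < zs.length
  · rw [pos_succ h]; omega
  · unfold pos
    rw [List.take_of_length_le (by omega), List.take_of_length_le (by omega)]

theorem pos_mono : Monotone (pos z0 zs) :=
  monotone_nat_of_le_succ (pos_le_succ z0 zs)

theorem block_cases (hP : IsOnePart S a b v z0 zs zl) {i : ℕ} (hi : i < zs.length) :
    zs[i] = S a ∨ zs[i] = [b] := by
  have := hP.2.2.1 zs[i] (zs.getElem_mem hi)
  simpa [Set.mem_insert_iff] using this

theorem blocklen (hP : IsOnePart S a b v z0 zs zl) (hn : 1 ≤ (S a).length)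
    {i : ℕ} (h : i < zs.length) : 1 ≤ zs[i].length := by
  rcases block_cases hP h with hz | hz <;> rw [hz]
  · exact hn
  · simp

theorem pos_strict (hP : IsOnePart S a b v z0 zs zl) (hn : 1 ≤ (S a).length)
    {i j : ℕ} (hij : i < j) : pos z0 zs i < pos z0 zs j ∨ zs.length ≤ i := by
  by_cases h : i < zs.length
  · left
    have h1 : pos z0 zs (i+1) ≤ pos z0 zs j := pos_mono (by omega)
    have h2 := pos_succ (z0 := z0) h
    have h3 := blocklen hP hn h
    omega
  · right; omega

theorem take_flatten_prefix (zs : List (List A)) (i : ℕ) : (zs.take i).flatten <+: zs.flatten := by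
  conv_rhs => rw [← List.take_append_drop i zs]
  rw [List.flatten_append]; exact List.prefix_append _ _

theorem take_pos_eq (hveq : v = z0 ++ zs.flatten ++ zl) (i : ℕ) :
    v.take (pos z0 zs i) = z0 ++ (zs.take i).flatten := by
  obtain ⟨t, ht⟩ := take_flatten_prefix zs i
  have hv2 : v = (z0 ++ (zs.take i).flatten) ++ (t ++ zl) := by
    rw [hveq, ← ht]; simp
  have hlen : (z0 ++ (zs.take i).flatten).length = pos z0 zs i := by simp [pos]
  rw [hv2, ← hlen, List.take_left]

theorem take_pos_add (hveq : v = z0 ++ zs.flatten ++ zl) {i : ℕ} (hi : i < zs.length)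
    {o : ℕ} (ho : o ≤ zs[i].length) :
    v.take (pos z0 zs i + o) = z0 ++ (zs.take i).flatten ++ zs[i].take o := by
  obtain ⟨t, ht⟩ := take_flatten_prefix zs (i+1)
  have hft := flatten_take_succ (zs := zs) hi
  have hv2 : v = (z0 ++ (zs.take i).flatten ++ zs[i].take o) ++ (zs[i].drop o ++ (t ++ zl)) := by
    rw [hveq, ← ht, hft]
    simp only [List.append_assoc]
    rw [show zs[i].take o ++ (zs[i].drop o ++ (t ++ zl)) = zs[i] ++ (t ++ zl) by
      rw [← List.append_assoc, List.take_append_drop]]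
  have hlen : (z0 ++ (zs.take i).flatten ++ zs[i].take o).length = pos z0 zs i + o := by
    simp [pos, List.length_take]
    omega
  rw [hv2, ← hlen, List.take_left]

theorem cnt_pos_add (hveq : v = z0 ++ zs.flatten ++ zl) (a : A) {i : ℕ} (hi : i < zs.length)
    {o : ℕ} (ho : o ≤ zs[i].length) :
    cnt a v (pos z0 zs i + o) = cnt a v (pos z0 zs i) + (zs[i].take o).count a := by
  unfold cnt
  rw [take_pos_add hveq hi ho, take_pos_eq hveq i]
  simp [List.count_append]
  omega

theorem IsPrefix.getD' {l1 l2 : List A} (h : l1 <+: l2) {i : ℕ} (hi : i < l1.length) (d : A) :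
    l2.getD i d = l1.getD i d := by
  rw [List.getD_eq_getElem l2 d (hi.trans_le h.length_le), List.getD_eq_getElem l1 d hi]
  exact (h.getElem hi).symm

theorem getD_pos_add (hveq : v = z0 ++ zs.flatten ++ zl) (d : A) {i : ℕ} (hi : i < zs.length)
    {o : ℕ} (ho : o < zs[i].length) :
    v.getD (pos z0 zs i + o) d = zs[i].getD o d := by
  have h1 : v.take (pos z0 zs i + zs[i].length) = (z0 ++ (zs.take i).flatten) ++ zs[i] := by
    rw [take_pos_add hveq hi le_rfl, List.take_length]
  have hpre : (z0 ++ (zs.take i).flatten) ++ zs[i] <+: v := by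
    rw [← h1]; exact List.take_prefix _ v
  have hlen : (z0 ++ (zs.take i).flatten).length = pos z0 zs i := by simp [pos]
  have hi2 : pos z0 zs i + o < ((z0 ++ (zs.take i).flatten) ++ zs[i]).length := by
    rw [List.length_append, hlen]; omega
  rw [IsPrefix.getD' hpre hi2 d]
  rw [List.getD_eq_getElem _ d hi2, List.getD_eq_getElem _ d ho]
  rw [List.getElem_append_right (by omega)]
  congr 1
  omega

theorem z0_len (hP : IsOnePart S a b v z0 zs zl) (hn : 1 ≤ (S a).length) :
    z0.length ≤ (S a).length := by
  obtain ⟨x, hx, hsuf⟩ := hP.2.1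
  have h1 := hsuf.length_le
  rcases (by simpa [Set.mem_insert_iff] using hx : x = S a ∨ x = [b]) with h | h
  · subst h; exact h1
  · subst h; simp at h1; omega

theorem zl_len (hP : IsOnePart S a b v z0 zs zl) (hn : 1 ≤ (S a).length) :
    zl.length ≤ (S a).length := by
  obtain ⟨x, hx, hpre⟩ := hP.2.2.2
  have h1 := hpre.length_le
  rcases (by simpa [Set.mem_insert_iff] using hx : x = S a ∨ x = [b]) with h | h
  · subst h; exact h1
  · subst h; simp at h1; omega

theorem pos_last (hP : IsOnePart S a b v z0 zs zl) :
    pos z0 zs zs.length + zl.length = v.length := by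
  rw [hP.1]
  simp [pos, List.take_length]
  omega

theorem mem_cuts {p : ℕ} : p ∈ cuts z0 zs ↔ ∃ i ≤ zs.length, pos z0 zs i = p := by
  constructor <;> rintro ⟨i, hi, h⟩ <;> exact ⟨i, hi, h.symm⟩

theorem pos_mem_cuts {i : ℕ} (hi : i ≤ zs.length) : pos z0 zs i ∈ cuts z0 zs :=
  mem_cuts.mpr ⟨i, hi, rfl⟩

theorem coverage (hP : IsOnePart S a b v z0 zs zl) (hn : 1 ≤ (S a).length) {p : ℕ}
    (h0 : pos z0 zs 0 ≤ p) (h1 : p < pos z0 zs zs.length) :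
    ∃ i, ∃ h : i < zs.length, pos z0 zs i ≤ p ∧ p < pos z0 zs (i+1) := by
  suffices H : ∀ k, k ≤ zs.length → p < pos z0 zs k →
      ∃ i, ∃ h : i < zs.length, pos z0 zs i ≤ p ∧ p < pos z0 zs (i+1) from
    H zs.length le_rfl h1
  intro k
  induction k with
  | zero => intro _ h; omega
  | succ k ih =>
    intro hk h
    by_cases hkp : pos z0 zs k ≤ p
    · exact ⟨k, by omega, hkp, h⟩
    · exact ih (by omega) (by omega)

/-- margin form of coverage -/
theorem coverage' (hP : IsOnePart S a b v z0 zs zl) (hn : 1 ≤ (S a).length) {p : ℕ}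
    (h0 : (S a).length ≤ p) (h1 : p + 2*(S a).length ≤ v.length) :
    ∃ i, ∃ h : i < zs.length, pos z0 zs i ≤ p ∧ p < pos z0 zs (i+1) := by
  apply coverage hP hn
  · have := z0_len hP hn
    have hpos0 : pos z0 zs 0 = z0.length := by simp [pos]
    omega
  · have := zl_len hP hn
    have := pos_last hP
    omega

theorem cover_unique (hP : IsOnePart S a b v z0 zs zl) {p i j : ℕ}
    (hi : i < zs.length) (hj : j < zs.length)
    (h1 : pos z0 zs i ≤ p) (h2 : p < pos z0 zs (i+1))
    (h1' : pos z0 zs j ≤ p) (h2' : p < pos z0 zs (j+1)) :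
    i = j := by
  rcases lt_trichotomy i j with h | h | h
  · have : pos z0 zs (i+1) ≤ pos z0 zs j := pos_mono (by omega)
    omega
  · exact h
  · have : pos z0 zs (j+1) ≤ pos z0 zs i := pos_mono (by omega)
    omega

theorem cut_in_block {p i : ℕ} (hi : i < zs.length)
    (h1 : pos z0 zs i ≤ p) (h2 : p < pos z0 zs (i+1)) (hc : p ∈ cuts z0 zs) :
    p = pos z0 zs i := by
  obtain ⟨j, hj, hpj⟩ := mem_cuts.mp hc
  rcases le_or_gt j i with h | h
  · have := pos_mono (z0 := z0) (zs := zs) h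
    omega
  · have : pos z0 zs (i+1) ≤ pos z0 zs j := pos_mono (by omega)
    omega

theorem cnt_cuts (hP : IsOnePart S a b v z0 zs zl) (hab : a ≠ b) {i : ℕ} (hi : i ≤ zs.length) :
    cnt a v (pos z0 zs i) ≡ z0.count a [MOD (S a).count a] := by
  induction i with
  | zero =>
    have h0 : pos z0 zs 0 = z0.length := by simp [pos]
    have ht : v.take z0.length = z0 := by
      rw [hP.1, List.append_assoc]; exact List.take_left
    rw [h0]; unfold cnt; rw [ht]
  | succ i ih =>
    have hi' : i < zs.length := by omega
    have h8 := cnt_pos_add hP.1 a hi' (o := zs[i].length) le_rfl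
    rw [← pos_succ hi'] at h8
    rw [List.take_length] at h8
    rcases block_cases hP hi' with h | h
    · rw [h] at h8
      rw [h8]
      have hMM : (S a).count a ≡ 0 [MOD (S a).count a] := by
        unfold Nat.ModEq; simp
      calc cnt a v (pos z0 zs i) + (S a).count a
          ≡ cnt a v (pos z0 zs i) + 0 [MOD (S a).count a] := Nat.ModEq.add_left _ hMM
        _ ≡ z0.count a [MOD (S a).count a] := by simpa using ih (by omega)
    · rw [h] at h8
      have h9 : ([b] : List A).count a = 0 := by
        simp [List.count_cons]
        exact Ne.symm hab
      rw [h9] at h8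
      rw [h8]
      simpa using ih (by omega)

theorem UB_rho (hP : IsOnePart S a b v z0 zs zl) (hab : a ≠ b) {c : ℕ}
    (hc : UB S a z0 zs c) : cnt a v c ≡ z0.count a [MOD (S a).count a] := by
  obtain ⟨i, hi, hpos, hblock⟩ := hc
  rw [← hpos]
  exact cnt_cuts hP hab (le_of_lt hi)

theorem UB_cnt (hP : IsOnePart S a b v z0 zs zl) {c : ℕ} (hc : UB S a z0 zs c)
    {o : ℕ} (ho : o ≤ (S a).length) :
    cnt a v (c + o) = cnt a v c + ((S a).take o).count a := by
  obtain ⟨i, hi, hpos, hblock⟩ := hc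
  subst hpos
  rw [cnt_pos_add hP.1 a hi (by rw [hblock]; exact ho), hblock]

theorem UB_getD (hP : IsOnePart S a b v z0 zs zl) {c : ℕ} (hc : UB S a z0 zs c)
    {o : ℕ} (ho : o < (S a).length) (d : A) :
    v.getD (c + o) d = (S a).getD o d := by
  obtain ⟨i, hi, hpos, hblock⟩ := hc
  subst hpos
  rw [getD_pos_add hP.1 d hi (by rw [hblock]; exact ho), hblock]

theorem UB_cuts {c : ℕ} (hc : UB S a z0 zs c) : c ∈ cuts z0 zs := by
  obtain ⟨i, hi, hpos, hblock⟩ := hc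
  exact hpos ▸ pos_mem_cuts (le_of_lt hi)

theorem UB_unique (hP : IsOnePart S a b v z0 zs zl) (hn : 1 ≤ (S a).length)
    {c c' x : ℕ} (hc : UB S a z0 zs c) (hc' : UB S a z0 zs c')
    (h1 : c ≤ x) (h2 : x < c + (S a).length) (h1' : c' ≤ x) (h2' : x < c' + (S a).length) :
    c = c' := by
  obtain ⟨i, hi, hpos, hblock⟩ := hc
  obtain ⟨j, hj, hpos', hblock'⟩ := hc'
  subst hpos; subst hpos'
  have e1 : pos z0 zs (i+1) = pos z0 zs i + (S a).length := by
    rw [pos_succ hi, hblock]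
  have e2 : pos z0 zs (j+1) = pos z0 zs j + (S a).length := by
    rw [pos_succ hj, hblock']
  have := cover_unique hP hi hj h1 (by omega) h1' (by omega)
  subst this; rfl

/-- if `u[n-1] = a` then `(u.take o).count a < u.count a` for `o < n` -/
theorem count_take_lt (hn : 1 ≤ (S a).length) (hab : a ≠ b)
    (hun : (S a).getD ((S a).length - 1) b = a) {o : ℕ} (ho : o < (S a).length) :
    ((S a).take o).count a < (S a).count a := by
  have hsplit : (S a).count a = ((S a).take o).count a + ((S a).drop o).count a := by
    rw [← List.count_append, List.take_append_drop]
  have hmem : a ∈ (S a).drop o := by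
    refine List.mem_iff_getElem.mpr ⟨(S a).length - 1 - o, ?_, ?_⟩
    · rw [List.length_drop]; omega
    · rw [List.getElem_drop]
      rw [List.getD_eq_getElem _ b (by omega)] at hun
      convert hun using 2
      omega
  have := List.count_pos_iff.mpr hmem
  omega

/-- if `u[0] = a` then `1 ≤ (u.take o).count a` for `1 ≤ o` -/
theorem count_take_pos (hn : 1 ≤ (S a).length) (hu0 : (S a).getD 0 b = a)
    {o : ℕ} (ho : 1 ≤ o) : 1 ≤ ((S a).take o).count a := by
  apply List.count_pos_iff.mpr
  refine List.mem_iff_getElem.mpr ⟨0, ?_, ?_⟩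
  · rw [List.length_take]; omega
  · rw [List.getElem_take]
    rw [List.getD_eq_getElem _ b (by omega)] at hu0
    exact hu0

theorem count_take_succ (l : List A) (x : A) {o : ℕ} (h : o < l.length) :
    (l.take (o+1)).count x = (l.take o).count x + if l[o] = x then 1 else 0 := by
  rw [← List.take_concat_get' l o h, List.count_append]
  simp [List.count_cons]

theorem count_take_inj (hab : a ≠ b) {o o' : ℕ} (ho : o < (S a).length) (ho' : o' < (S a).length)
    (ha : (S a).getD o b = a) (ha' : (S a).getD o' b = a)
    (h : ((S a).take o).count a = ((S a).take o').count a) : o = o' := by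
  have key : ∀ i j, i < (S a).length → j < (S a).length → (S a).getD i b = a → i < j →
      ((S a).take i).count a < ((S a).take j).count a := by
    intro i j hi hj hia hij
    have h1 := count_take_succ (S a) a hi
    rw [List.getD_eq_getElem _ b hi] at hia
    rw [if_pos hia] at h1
    have h2 : ((S a).take (i+1)).count a ≤ ((S a).take j).count a := by
      apply List.Sublist.count_le
      apply List.IsPrefix.sublist
      rw [show (S a).take (i+1) = ((S a).take j).take (i+1) by
        rw [List.take_take]; congr 1; omega]
      exact List.take_prefix _ _
    omega
  rcases lt_trichotomy o o' with hlt | he | hlt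
  · exact absurd h (Nat.ne_of_lt (key o o' ho ho' ha hlt))
  · exact he
  · exact absurd h.symm (Nat.ne_of_lt (key o' o ho' ho ha' hlt))

/-- every middle `a`-position is covered by a `u`-block, with count bookkeeping -/
theorem cover_a (hP : IsOnePart S a b v z0 zs zl) (hab : a ≠ b) (hn : 1 ≤ (S a).length)
    {x : ℕ} (hx1 : (S a).length ≤ x) (hx2 : x + 2*(S a).length ≤ v.length)
    (hax : v.getD x b = a) :
    ∃ c o, UB S a z0 zs c ∧ c + o = x ∧ o < (S a).length ∧ (S a).getD o b = a ∧
      cnt a v x = cnt a v c + ((S a).take o).count a := by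
  obtain ⟨i, hi, h1, h2⟩ := coverage' hP hn hx1 hx2
  rcases block_cases hP hi with hu | hb
  · have hlen : pos z0 zs (i+1) = pos z0 zs i + (S a).length := by rw [pos_succ hi, hu]
    have hUB : UB S a z0 zs (pos z0 zs i) := ⟨i, hi, rfl, hu⟩
    have ho : x - pos z0 zs i < (S a).length := by omega
    have hg := UB_getD hP hUB ho b
    rw [show pos z0 zs i + (x - pos z0 zs i) = x by omega] at hg
    refine ⟨pos z0 zs i, x - pos z0 zs i, hUB, by omega, ho, by rw [← hg, hax], ?_⟩
    have := UB_cnt hP hUB (le_of_lt ho)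
    rw [show pos z0 zs i + (x - pos z0 zs i) = x by omega] at this
    exact this
  · exfalso
    have hlen : pos z0 zs (i+1) = pos z0 zs i + 1 := by rw [pos_succ hi, hb]; rfl
    have hxeq : x = pos z0 zs i := by omega
    have h0 := getD_pos_add hP.1 b hi (o := 0) (by rw [hb]; simp)
    rw [hb, Nat.add_zero, ← hxeq] at h0
    rw [h0] at hax
    simp at hax
    exact hab hax.symm

/-- two a-positions with congruent counts have the same offset in their covering blocks -/
theorem offset_det (hP : IsOnePart S a b v z0 zs zl) (hab : a ≠ b) (hn : 1 ≤ (S a).length)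
    (hun : (S a).getD ((S a).length - 1) b = a)
    {x y : ℕ} (hx1 : (S a).length ≤ x) (hx2 : x + 2*(S a).length ≤ v.length)
    (hy1 : (S a).length ≤ y) (hy2 : y + 2*(S a).length ≤ v.length)
    (hax : v.getD x b = a) (hay : v.getD y b = a)
    (hmod : cnt a v x ≡ cnt a v y [MOD (S a).count a]) :
    ∃ o c c', UB S a z0 zs c ∧ UB S a z0 zs c' ∧ c + o = x ∧ c' + o = y ∧
      o < (S a).length ∧ (S a).getD o b = a := by
  obtain ⟨c, o, hc, hco, ho, hoa, hcnt⟩ := cover_a hP hab hn hx1 hx2 hax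
  obtain ⟨c', o', hc', hco', ho', hoa', hcnt'⟩ := cover_a hP hab hn hy1 hy2 hay
  have hrc := UB_rho hP hab hc
  have hrc' := UB_rho hP hab hc'
  set M := (S a).count a
  have h1 : z0.count a + ((S a).take o).count a ≡ z0.count a + ((S a).take o').count a [MOD M] := by
    calc z0.count a + ((S a).take o).count a
        ≡ cnt a v c + ((S a).take o).count a [MOD M] := Nat.ModEq.add_right _ hrc.symm
      _ = cnt a v x := hcnt.symm
      _ ≡ cnt a v y [MOD M] := hmod
      _ = cnt a v c' + ((S a).take o').count a := hcnt'
      _ ≡ z0.count a + ((S a).take o').count a [MOD M] := Nat.ModEq.add_right _ hrc'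
  have h2 : ((S a).take o).count a ≡ ((S a).take o').count a [MOD M] :=
    Nat.ModEq.add_left_cancel' _ h1
  have h3 : ((S a).take o).count a = ((S a).take o').count a := by
    have b1 := count_take_lt hn hab hun ho
    have b2 := count_take_lt hn hab hun ho'
    unfold Nat.ModEq at h2
    rw [Nat.mod_eq_of_lt b1, Nat.mod_eq_of_lt b2] at h2
    exact h2
  have h4 : o = o' := count_take_inj hab ho ho' hoa hoa' h3
  subst h4
  exact ⟨o, c, c', hc, hc', hco, hco', ho, hoa⟩

theorem getD_a_lt (hab : a ≠ b) {v : List A} {i : ℕ} (h1 : v.getD i b = a) :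
    ∃ h : i < v.length, v[i] = a := by
  have hlen : i < v.length := by
    by_contra h
    rw [List.getD_eq_default _ b (by omega)] at h1
    exact hab h1.symm
  exact ⟨hlen, by rw [← List.getD_eq_getElem v b hlen]; exact h1⟩

theorem NA_getD (hab : a ≠ b) {v : List A}
    (hnoaa : v.Chain' (fun x y => ¬(x = a ∧ y = a))) {i : ℕ}
    (h1 : v.getD i b = a) (h2 : v.getD (i+1) b = a) : False := by
  obtain ⟨hl1, he1⟩ := getD_a_lt hab h1
  obtain ⟨hl2, he2⟩ := getD_a_lt hab h2
  have hchain := List.isChain_iff_getElem.mp hnoaa i (by omega)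
  exact hchain ⟨by simpa using he1, by simpa using he2⟩

/-- distinct u-blocks are at distance at least n+1 (no aa) -/
theorem UB_spacing (hP : IsOnePart S a b v z0 zs zl) (hab : a ≠ b) (hn : 1 ≤ (S a).length)
    (hu0 : (S a).getD 0 b = a) (hun : (S a).getD ((S a).length - 1) b = a)
    (hnoaa : v.Chain' (fun x y => ¬(x = a ∧ y = a)))
    {c c' : ℕ} (hc : UB S a z0 zs c) (hc' : UB S a z0 zs c') (hlt : c < c') :
    c + (S a).length + 1 ≤ c' := by
  obtain ⟨i, hi, hpos, hblock⟩ := hc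
  obtain ⟨j, hj, hpos', hblock'⟩ := hc'
  have hij : i < j := by
    by_contra hcon
    have : pos z0 zs j ≤ pos z0 zs i := pos_mono (by omega)
    omega
  have e1 : pos z0 zs (i+1) = pos z0 zs i + (S a).length := by rw [pos_succ hi, hblock]
  have hmono : pos z0 zs (i+1) ≤ pos z0 zs j := pos_mono (by omega)
  have hge : c + (S a).length ≤ c' := by omega
  by_contra hcon
  have heq : c' = c + (S a).length := by omega
  -- letters at c + n - 1 and c + n are both a
  have ha1 : v.getD (c + ((S a).length - 1)) b = a := by
    rw [UB_getD hP ⟨i, hi, hpos, hblock⟩ (by omega) b]; exact hun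
  have ha2 : v.getD (c + (S a).length) b = a := by
    rw [show c + (S a).length = c' + 0 by omega]
    rw [UB_getD hP ⟨j, hj, hpos', hblock'⟩ (by omega) b]; exact hu0
  have ha1' : v.getD (c + (S a).length - 1) b = a := by
    rw [show c + (S a).length - 1 = c + ((S a).length - 1) by omega]; exact ha1
  have ha2' : v.getD (c + (S a).length - 1 + 1) b = a := by
    rw [show c + (S a).length - 1 + 1 = c + (S a).length by omega]; exact ha2
  exact NA_getD hab hnoaa ha1' ha2'

theorem count_take_pred (hn : 1 ≤ (S a).length) (hab : a ≠ b)
    (hun : (S a).getD ((S a).length - 1) b = a) :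
    ((S a).take ((S a).length - 1)).count a + 1 = (S a).count a := by
  have h1 := count_take_succ (S a) a (show (S a).length - 1 < (S a).length by omega)
  rw [List.getD_eq_getElem _ b (by omega)] at hun
  rw [if_pos hun] at h1
  rw [show (S a).length - 1 + 1 = (S a).length by omega, List.take_length] at h1
  omega

theorem cuts_agree (hP1 : IsOnePart S a b v z0 zs zl) {z0' zl' : List A} {zs' : List (List A)}
    (hP2 : IsOnePart S a b v z0' zs' zl')
    (hab : a ≠ b) (hn : 1 ≤ (S a).length)
    (hu0 : (S a).getD 0 b = a) (hun : (S a).getD ((S a).length - 1) b = a)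
    (hres : z0.count a ≡ z0'.count a [MOD (S a).count a])
    {p : ℕ} (hp1 : (S a).length ≤ p) (hp2 : p + 2*(S a).length ≤ v.length)
    (hp : p ∈ cuts z0 zs) : p ∈ cuts z0' zs' := by
  obtain ⟨i, hi, h1, h2⟩ := coverage' hP2 hn hp1 hp2
  by_cases he : p = pos z0' zs' i
  · exact he ▸ pos_mem_cuts (le_of_lt hi)
  rcases block_cases hP2 hi with hu | hb
  · exfalso
    set c := pos z0' zs' i with hcdef
    have hUB : UB S a z0' zs' c := ⟨i, hi, rfl, hu⟩
    have hlen : pos z0' zs' (i+1) = c + (S a).length := by rw [pos_succ hi, hu]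
    have ho1 : 1 ≤ p - c := by omega
    have ho2 : p - c < (S a).length := by omega
    have h8 := UB_cnt hP2 hUB (le_of_lt ho2)
    rw [show c + (p - c) = p by omega] at h8
    have hr1 : cnt a v p ≡ z0.count a [MOD (S a).count a] := by
      obtain ⟨j, hj, hpj⟩ := mem_cuts.mp hp
      exact hpj ▸ cnt_cuts hP1 hab hj
    have hr2 := UB_rho hP2 hab hUB
    set M := (S a).count a with hMdef
    set t := ((S a).take (p - c)).count a with htdef
    have hkey : t ≡ 0 [MOD M] := by
      have hh : cnt a v c + t ≡ cnt a v c + 0 [MOD M] := by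
        rw [← h8, Nat.add_zero]
        calc cnt a v p ≡ z0.count a [MOD M] := hr1
          _ ≡ z0'.count a [MOD M] := hres
          _ ≡ cnt a v c [MOD M] := hr2.symm
      exact Nat.ModEq.add_left_cancel' _ hh
    have hb1 := count_take_pos hn hu0 ho1
    have hb2 := count_take_lt hn hab hun ho2
    unfold Nat.ModEq at hkey
    rw [Nat.mod_eq_of_lt hb2] at hkey
    simp at hkey
    omega
  · have hlen : pos z0' zs' (i+1) = pos z0' zs' i + 1 := by rw [pos_succ hi, hb]; rfl
    exact absurd (by omega : p = pos z0' zs' i) he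

theorem main' (hP1 : IsOnePart S a b v z0 zs zl) {z0' zl' : List A} {zs' : List (List A)}
    (hP2 : IsOnePart S a b v z0' zs' zl')
    (hab : a ≠ b) (hcover : ∀ x : A, x = a ∨ x = b) (hn : 3 ≤ (S a).length)
    (hu0 : (S a).getD 0 b = a) (hun : (S a).getD ((S a).length - 1) b = a)
    (hnoaa : v.Chain' (fun x y => ¬(x = a ∧ y = a)))
    {p : ℕ} (hp1 : 8*(S a).length ≤ p) (hp2 : p + 8*(S a).length ≤ v.length)
    (hcut1 : p ∈ cuts z0 zs) (hcut2 : p ∉ cuts z0' zs') :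
    ∃ q, 1 ≤ q ∧ q ≤ 2*(S a).length ∧ ∀ x, 8*(S a).length ≤ x →
      x + q + 8*(S a).length ≤ v.length → v.getD x b = v.getD (x + q) b := by
  have hn1 : 1 ≤ (S a).length := by omega
  have hres : ¬ (z0.count a ≡ z0'.count a [MOD ((S a).count a)]) := by
    intro h
    exact hcut2 (cuts_agree hP1 hP2 hab hn1 hu0 hun h (by omega) (by omega) hcut1)
  -- anchor : U2-block strictly containing p
  obtain ⟨i, hi, h1, h2⟩ := coverage' hP2 hn1 (show (S a).length ≤ p by omega) (by omega)
  have hu : zs'[i] = S a := by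
    rcases block_cases hP2 hi with h | h
    · exact h
    · exfalso
      have hl : pos z0' zs' (i+1) = pos z0' zs' i + 1 := by rw [pos_succ hi, h]; rfl
      exact hcut2 (by rw [(by omega : p = pos z0' zs' i)]; exact pos_mem_cuts hi.le)
  set c2 := pos z0' zs' i with hc2def
  have hUB2 : UB S a z0' zs' c2 := ⟨i, hi, rfl, hu⟩
  have hlen2 : pos z0' zs' (i+1) = c2 + (S a).length := by rw [pos_succ hi, hu]
  have hc2a : v.getD c2 b = a := by
    have h := UB_getD hP2 hUB2 (show 0 < (S a).length by omega) b
    rw [Nat.add_zero] at h; rw [h]; exact hu0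
  -- covering-1 block of c2
  obtain ⟨c1, e, hUB1, hc1e, he_lt, hea, hcnt_e⟩ :=
    cover_a hP1 hab hn1 (show (S a).length ≤ c2 by omega) (by omega) hc2a
  have hc1a : v.getD c1 b = a := by
    have h := UB_getD hP1 hUB1 (show 0 < (S a).length by omega) b
    rw [Nat.add_zero] at h; rw [h]; exact hu0
  have he1 : 1 ≤ e := by
    rcases Nat.eq_zero_or_pos e with h | h
    · exfalso
      apply hres
      calc z0.count a ≡ cnt a v c1 [MOD ((S a).count a)] := (UB_rho hP1 hab hUB1).symm
        _ = cnt a v c2 := by rw [show c1 = c2 by omega]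
        _ ≡ z0'.count a [MOD ((S a).count a)] := UB_rho hP2 hab hUB2
    · exact h
  -- covering-2 block of c1
  obtain ⟨g2, e', hUB2', hg2e, he'_lt, he'a, hcnt_e'⟩ :=
    cover_a hP2 hab hn1 (show (S a).length ≤ c1 by omega) (by omega) hc1a
  -- step lemmas
  have step2 : ∀ x y gy oy, (S a).length ≤ x → x + 2*(S a).length ≤ v.length → (S a).length ≤ y → y + 2*(S a).length ≤ v.length →
      v.getD x b = a → v.getD y b = a → cnt a v x ≡ cnt a v y [MOD ((S a).count a)] →
      UB S a z0' zs' gy → gy + oy = y → oy < (S a).length →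
      ∃ g, UB S a z0' zs' g ∧ g + oy = x := by
    intro x y gy oy hx1 hx2 hy1 hy2 hax hay hmod hgy hgye hoy
    obtain ⟨o, c, c', hc, hc', hco, hco', ho, hoa⟩ :=
      offset_det hP2 hab hn1 hun hx1 hx2 hy1 hy2 hax hay hmod
    have hcg : c' = gy := UB_unique hP2 hn1 (x := y) hc' hgy
      (by omega) (by omega) (by omega) (by omega)
    exact ⟨c, hc, by omega⟩
  have step1 : ∀ x y gy oy, (S a).length ≤ x → x + 2*(S a).length ≤ v.length → (S a).length ≤ y → y + 2*(S a).length ≤ v.length →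
      v.getD x b = a → v.getD y b = a → cnt a v x ≡ cnt a v y [MOD ((S a).count a)] →
      UB S a z0 zs gy → gy + oy = y → oy < (S a).length →
      ∃ g, UB S a z0 zs g ∧ g + oy = x := by
    intro x y gy oy hx1 hx2 hy1 hy2 hax hay hmod hgy hgye hoy
    obtain ⟨o, c, c', hc, hc', hco, hco', ho, hoa⟩ :=
      offset_det hP1 hab hn1 hun hx1 hx2 hy1 hy2 hax hay hmod
    have hcg : c' = gy := UB_unique hP1 hn1 (x := y) hc' hgy
      (by omega) (by omega) (by omega) (by omega)
    exact ⟨c, hc, by omega⟩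
  -- backward invariance
  have hback : ∀ c, UB S a z0 zs c → 4*(S a).length ≤ c → c + 4*(S a).length ≤ v.length →
      ∃ d, UB S a z0 zs d ∧ d + (e + e') = c := by
    intro c hc hcm1 hcm2
    have hca : v.getD c b = a := by
      have h := UB_getD hP1 hc (show 0 < (S a).length by omega) b
      rw [Nat.add_zero] at h; rw [h]; exact hu0
    have hmod : cnt a v c ≡ cnt a v c1 [MOD ((S a).count a)] :=
      (UB_rho hP1 hab hc).trans (UB_rho hP1 hab hUB1).symm
    obtain ⟨g, hg, hge⟩ := step2 c c1 g2 e' (by omega) (by omega) (by omega) (by omega)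
      hca hc1a hmod hUB2' hg2e he'_lt
    have hga : v.getD g b = a := by
      have h := UB_getD hP2 hg (show 0 < (S a).length by omega) b
      rw [Nat.add_zero] at h; rw [h]; exact hu0
    have hmod2 : cnt a v g ≡ cnt a v c2 [MOD ((S a).count a)] :=
      (UB_rho hP2 hab hg).trans (UB_rho hP2 hab hUB2).symm
    obtain ⟨d, hd, hde⟩ := step1 g c2 c1 e (by omega) (by omega) (by omega) (by omega)
      hga hc2a hmod2 hUB1 hc1e he_lt
    exact ⟨d, hd, by omega⟩
  -- last-letter anchors
  have hM1 : 1 ≤ ((S a).count a) := by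
    have h := count_take_lt hn1 hab hun (show 0 < (S a).length by omega)
    rw [List.take_zero] at h
    simp only [List.count_nil] at h
    omega
  have hz_a : v.getD (c1 + ((S a).length - 1)) b = a := by
    rw [UB_getD hP1 hUB1 (show (S a).length - 1 < (S a).length by omega) b]; exact hun
  obtain ⟨gA, oA, hgA, hgAe, hoA_lt, hoAa, hcnt_A⟩ :=
    cover_a hP2 hab hn1 (show (S a).length ≤ c1 + ((S a).length-1) by omega) (by omega) hz_a
  have hctp := count_take_pred hn1 hab hun
  have hcnt_c1 : cnt a v (c1 + ((S a).length-1)) = cnt a v c1 + (((S a).count a) - 1) := by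
    rw [UB_cnt hP1 hUB1 (show (S a).length - 1 ≤ (S a).length by omega)]
    omega
  have hoA2 : oA ≤ (S a).length - 2 := by
    rcases Nat.lt_or_ge oA ((S a).length-1) with h | h
    · omega
    · exfalso
      have hoAn : oA = (S a).length - 1 := by omega
      apply hres
      have e1 : cnt a v c1 = cnt a v gA := by
        rw [hcnt_c1] at hcnt_A
        rw [hoAn] at hcnt_A
        omega
      calc z0.count a ≡ cnt a v c1 [MOD ((S a).count a)] := (UB_rho hP1 hab hUB1).symm
        _ = cnt a v gA := e1
        _ ≡ z0'.count a [MOD ((S a).count a)] := UB_rho hP2 hab hgA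
  have hz'_a : v.getD (gA + ((S a).length-1)) b = a := by
    rw [UB_getD hP2 hgA (show (S a).length - 1 < (S a).length by omega) b]; exact hun
  obtain ⟨gB, oB, hgB, hgBe, hoB_lt, hoBa, hcnt_B⟩ :=
    cover_a hP1 hab hn1 (show (S a).length ≤ gA + ((S a).length-1) by omega) (by omega) hz'_a
  have hcnt_gA : cnt a v (gA + ((S a).length-1)) = cnt a v gA + (((S a).count a) - 1) := by
    rw [UB_cnt hP2 hgA (show (S a).length - 1 ≤ (S a).length by omega)]
    omega
  have hoB2 : oB ≤ (S a).length - 2 := by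
    rcases Nat.lt_or_ge oB ((S a).length-1) with h | h
    · omega
    · exfalso
      have hoBn : oB = (S a).length - 1 := by omega
      apply hres
      have e1 : cnt a v gA = cnt a v gB := by
        rw [hcnt_gA] at hcnt_B
        rw [hoBn] at hcnt_B
        omega
      calc z0.count a ≡ cnt a v gB [MOD ((S a).count a)] := (UB_rho hP1 hab hgB).symm
        _ = cnt a v gA := e1.symm
        _ ≡ z0'.count a [MOD ((S a).count a)] := UB_rho hP2 hab hgA
  set qh := ((S a).length - 1 - oA) + ((S a).length - 1 - oB) with hqhdef
  -- forward invariance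
  have hfwd : ∀ c, UB S a z0 zs c → 4*(S a).length ≤ c → c + 4*(S a).length ≤ v.length →
      UB S a z0 zs (c + qh) := by
    intro c hc hm1 hm2
    have hza : v.getD (c + ((S a).length-1)) b = a := by
      rw [UB_getD hP1 hc (show (S a).length - 1 < (S a).length by omega) b]; exact hun
    have hmod : cnt a v (c + ((S a).length-1)) ≡ cnt a v (c1 + ((S a).length-1)) [MOD ((S a).count a)] := by
      rw [UB_cnt hP1 hc (show (S a).length-1 ≤ (S a).length by omega), UB_cnt hP1 hUB1 (show (S a).length-1 ≤ (S a).length by omega)]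
      exact Nat.ModEq.add_right _ ((UB_rho hP1 hab hc).trans (UB_rho hP1 hab hUB1).symm)
    obtain ⟨g, hg, hge⟩ := step2 (c + ((S a).length-1)) (c1 + ((S a).length-1)) gA oA (by omega) (by omega)
      (by omega) (by omega) hza hz_a hmod hgA hgAe hoA_lt
    have hga2 : v.getD (g + ((S a).length-1)) b = a := by
      rw [UB_getD hP2 hg (show (S a).length - 1 < (S a).length by omega) b]; exact hun
    have hmod2 : cnt a v (g + ((S a).length-1)) ≡ cnt a v (gA + ((S a).length-1)) [MOD ((S a).count a)] := by
      rw [UB_cnt hP2 hg (show (S a).length-1 ≤ (S a).length by omega), UB_cnt hP2 hgA (show (S a).length-1 ≤ (S a).length by omega)]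
      exact Nat.ModEq.add_right _ ((UB_rho hP2 hab hg).trans (UB_rho hP2 hab hgA).symm)
    obtain ⟨d, hd, hde⟩ := step1 (g + ((S a).length-1)) (gA + ((S a).length-1)) gB oB (by omega) (by omega)
      (by omega) (by omega) hga2 hz'_a hmod2 hgB hgBe hoB_lt
    have hdc : d = c + qh := by omega
    rwa [← hdc]
  set q := e + e' with hqdef
  have hq2 : q ≤ 2*(S a).length - 2 := by omega
  have hqh2 : qh ≤ 2*(S a).length - 2 := by omega
  -- q = qh via spacing
  obtain ⟨d0, hd0, hd0e⟩ := hback c1 hUB1 (by omega) (by omega)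
  have hfwd0 := hfwd d0 hd0 (by omega) (by omega)
  have hqq : qh = q := by
    by_contra hne
    have hsp1 := UB_spacing hP1 hab hn1 hu0 hun hnoaa hd0 hfwd0 (by omega : d0 < d0 + qh)
    have hsp2 := UB_spacing hP1 hab hn1 hu0 hun hnoaa hd0 hUB1 (by omega : d0 < c1)
    rcases Nat.lt_or_ge (d0 + qh) c1 with h | h
    · have := UB_spacing hP1 hab hn1 hu0 hun hnoaa hfwd0 hUB1 h
      omega
    · have hgt : c1 < d0 + qh := by omega
      have := UB_spacing hP1 hab hn1 hu0 hun hnoaa hUB1 hfwd0 hgt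
      omega
  refine ⟨q, by omega, by omega, ?_⟩
  intro x hx1 hx2
  rcases hcover (v.getD x b) with hxa | hxb
  · obtain ⟨c, o, hc, hco, ho, hoa2, _⟩ := cover_a hP1 hab hn1 (by omega) (by omega) hxa
    have hf := hfwd c hc (by omega) (by omega)
    rw [hqq] at hf
    have hg1 : v.getD (c + q + o) b = (S a).getD o b := UB_getD hP1 hf ho b
    have hg2 : v.getD (c + o) b = (S a).getD o b := UB_getD hP1 hc ho b
    rw [show x + q = c + q + o by omega, hg1, ← hg2, hco]
  · rcases hcover (v.getD (x+q) b) with hya | hyb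
    · exfalso
      obtain ⟨c, o, hc, hco, ho, hoa2, _⟩ := cover_a hP1 hab hn1 (by omega) (by omega) hya
      obtain ⟨d, hd, hde⟩ := hback c hc (by omega) (by omega)
      have hg1 := UB_getD hP1 hd ho b
      rw [show d + o = x by omega] at hg1
      rw [hg1, hoa2] at hxb
      exact hab hxb
    · rw [hxb, hyb]

end PartC

section PartB
variable {S : A → List A} {a b : A}

theorem subst_append (S : A → List A) (w1 w2 : List A) :
    subst S (w1 ++ w2) = subst S w1 ++ subst S w2 := by
  simp [subst]

theorem subst_cons (S : A → List A) (c : A) (w : List A) :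
    subst S (c :: w) = S c ++ subst S w := by
  simp [subst]

theorem WS_infix {w w' : List A} (h : w' <:+: w) (hw : w ∈ WS S) : w' ∈ WS S := by
  obtain ⟨x, n, hx⟩ := hw; exact ⟨x, n, h.trans hx⟩

theorem iter_mem_WS (S : A → List A) (x : A) (m : ℕ) : iter S m [x] ∈ WS S :=
  ⟨x, m, List.infix_refl _⟩

theorem NA_of_not_infix {w : List A} (h : ¬ [a,a] <:+: w) :
    w.Chain' (fun x y => ¬(x = a ∧ y = a)) := by
  induction w with
  | nil => simp [List.Chain']
  | cons c w ih =>
    rcases w with _ | ⟨c', w'⟩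
    · simp [List.Chain']
    · unfold List.Chain'; rw [List.isChain_cons_cons]
      refine ⟨?_, ih ?_⟩
      · rintro ⟨rfl, rfl⟩
        exact h (List.IsPrefix.isInfix ⟨w', rfl⟩)
      · intro h2
        exact h (h2.trans (List.infix_cons (List.infix_refl _)))

theorem NA_infix {v w : List A} (h : v <:+: w)
    (hw : w.Chain' (fun x y => ¬(x = a ∧ y = a))) :
    v.Chain' (fun x y => ¬(x = a ∧ y = a)) := by
  obtain ⟨s, t, hst⟩ := h
  rw [← hst] at hw
  have h1 := (List.isChain_append.mp hw).1
  exact (List.isChain_append.mp h1).2.1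

theorem NA_subst (hab : a ≠ b) (hcover : ∀ x : A, x = a ∨ x = b) (hSb : S b = [b])
    (hSa : 1 ≤ (S a).length)
    (hna_u : (S a).Chain' (fun x y => ¬(x = a ∧ y = a)))
    {w : List A} (hw : w.Chain' (fun x y => ¬(x = a ∧ y = a))) :
    (subst S w).Chain' (fun x y => ¬(x = a ∧ y = a)) := by
  induction w with
  | nil => simp [subst, List.Chain']
  | cons c w ih =>
    rw [subst_cons]
    have h1 : (S c).Chain' (fun x y => ¬(x = a ∧ y = a)) := by
      rcases hcover c with h | h
      · exact h ▸ hna_u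
      · rw [h, hSb]; simp [List.Chain']
    have h2 := ih hw.tail
    apply h1.append h2
    intro x hx y hy
    rintro ⟨hxa, hya⟩
    have hc : c = a := by
      rcases hcover c with h | h
      · exact h
      · exfalso
        rw [h, hSb] at hx
        simp at hx
        exact hab (hxa.symm.trans hx.symm)
    cases w with
    | nil => simp [subst] at hy
    | cons c2 w2 =>
      have hc2ne : S c2 ≠ [] := by
        rcases hcover c2 with h | h <;> rw [h]
        · intro hc'; rw [hc'] at hSa; simp at hSa
        · rw [hSb]; simp
      obtain ⟨hd, tl, hS2⟩ := List.exists_cons_of_ne_nil hc2ne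
      rw [subst_cons, hS2] at hy
      simp at hy
      have hc2 : c2 = a := by
        rcases hcover c2 with h | h
        · exact h
        · exfalso
          rw [h, hSb] at hS2
          have hdb : hd = b := by
            injection hS2 with h1 h2
            exact h1.symm
          exact hab (hya.symm.trans (hy.symm.trans hdb))
      exact (List.isChain_cons_cons.mp hw).1 ⟨hc, hc2⟩

theorem NA_iter (hab : a ≠ b) (hcover : ∀ x : A, x = a ∨ x = b) (hSb : S b = [b])
    (hSa : 1 ≤ (S a).length)
    (hna_u : (S a).Chain' (fun x y => ¬(x = a ∧ y = a))) (x : A) (m : ℕ) :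
    (iter S m [x]).Chain' (fun x y => ¬(x = a ∧ y = a)) := by
  induction m with
  | zero => simp [iter, List.Chain']
  | succ m ih =>
    have : iter S (m+1) [x] = subst S (iter S m [x]) :=
      Function.iterate_succ_apply' _ _ _
    rw [this]
    exact NA_subst hab hcover hSb hSa hna_u ih

theorem NA_WS (hab : a ≠ b) (hcover : ∀ x : A, x = a ∨ x = b) (hSb : S b = [b])
    (hSa : 1 ≤ (S a).length)
    (hna_u : (S a).Chain' (fun x y => ¬(x = a ∧ y = a)))
    {v : List A} (hv : v ∈ WS S) :
    v.Chain' (fun x y => ¬(x = a ∧ y = a)) := by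
  obtain ⟨x, m, hinf⟩ := hv
  exact NA_infix hinf (NA_iter hab hcover hSb hSa hna_u x m)

theorem subst_all_b (hSb : S b = [b]) {w : List A} (hw : ∀ x ∈ w, x = b) :
    subst S w = w := by
  induction w with
  | nil => simp [subst]
  | cons c w ih =>
    rw [subst_cons, hw c (by simp), hSb, ih (fun x hx => hw x (by simp [hx]))]
    rfl

theorem a_mem_Sa (hS : IsSubstSystem S) (hcover : ∀ x : A, x = a ∨ x = b) (hab : a ≠ b)
    (hSb : S b = [b]) : a ∈ S a := by
  by_contra hna
  have hallb : ∀ x ∈ S a, x = b := fun x hx => (hcover x).resolve_left (fun h => hna (h ▸ hx))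
  have h1 : ∀ m, 1 ≤ m → iter S m [a] = S a := by
    intro m hm
    induction m with
    | zero => omega
    | succ m ih =>
      have hstep : iter S (m+1) [a] = subst S (iter S m [a]) := Function.iterate_succ_apply' _ _ _
      rcases Nat.eq_zero_or_pos m with h | h
      · subst h
        rw [hstep]
        show subst S (iter S 0 [a]) = S a
        simp [iter, subst]
      · rw [hstep, ih (by omega), subst_all_b hSb hallb]
  have h2 : ∀ m, iter S m [b] = [b] := by
    intro m
    induction m with
    | zero => simp [iter]
    | succ m ih =>
      have hstep : iter S (m+1) [b] = subst S (iter S m [b]) := Function.iterate_succ_apply' _ _ _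
      rw [hstep, ih]
      show subst S [b] = [b]
      simp [subst, hSb]
  obtain ⟨e, hL, _⟩ := hS.1
  have hev := hL.eventually (Filter.eventually_ge_atTop ((S a).length + 2))
  obtain ⟨N, hN⟩ := Filter.eventually_atTop.mp hev
  rcases hcover e with rfl | rfl
  · have hb1 := hN (max N 1) (le_max_left _ _)
    rw [h1 _ (le_max_right _ _)] at hb1
    omega
  · have hb1 := hN N le_rfl
    rw [h2] at hb1
    simp only [List.length_cons, List.length_nil] at hb1
    omega

theorem repl_head (hab : a ≠ b) (hcover : ∀ x : A, x = a ∨ x = b) (hSb : S b = [b])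
    (hau : a ∈ S a) (hhb : ∃ t, S a = b :: t) :
    ∀ m, ∃ y, iter S m [a] = List.replicate m b ++ y ∧ a ∈ y := by
  intro m
  induction m with
  | zero => exact ⟨[a], by simp [iter], by simp⟩
  | succ m ih =>
    obtain ⟨y, hy, hay⟩ := ih
    have hstep : iter S (m+1) [a] = subst S (iter S m [a]) := Function.iterate_succ_apply' _ _ _
    have hrep : subst S (List.replicate m b) = List.replicate m b :=
      subst_all_b hSb (fun x hx => List.eq_of_mem_replicate hx)
    obtain ⟨c, y', rfl⟩ := List.exists_cons_of_ne_nil (List.ne_nil_of_mem hay)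
    have hSc : ∃ t, S c = b :: t := by
      rcases hcover c with h | h
      · exact h ▸ hhb
      · exact ⟨[], by rw [h, hSb]⟩
    obtain ⟨t, hSct⟩ := hSc
    have hmem : a ∈ S c ++ subst S y' := by
      have h0 : a ∈ subst S (c :: y') := List.mem_flatMap.mpr ⟨a, hay, hau⟩
      rwa [subst_cons] at h0
    refine ⟨t ++ subst S y', ?_, ?_⟩
    · rw [hstep, hy, subst_append, hrep, subst_cons, hSct, List.replicate_succ']
      simp
    · rw [hSct] at hmem
      rcases List.mem_append.mp hmem with h | h
      · rcases List.mem_cons.mp h with h' | h'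
        · exact absurd h' hab
        · exact List.mem_append.mpr (Or.inl h')
      · exact List.mem_append.mpr (Or.inr h)

theorem repl_last (hab : a ≠ b) (hcover : ∀ x : A, x = a ∨ x = b) (hSb : S b = [b])
    (hau : a ∈ S a) (hlb : ∃ t, S a = t ++ [b]) :
    ∀ m, ∃ y, iter S m [a] = y ++ List.replicate m b ∧ a ∈ y := by
  intro m
  induction m with
  | zero => exact ⟨[a], by simp [iter], by simp⟩
  | succ m ih =>
    obtain ⟨y, hy, hay⟩ := ih
    have hstep : iter S (m+1) [a] = subst S (iter S m [a]) := Function.iterate_succ_apply' _ _ _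
    have hrep : subst S (List.replicate m b) = List.replicate m b :=
      subst_all_b hSb (fun x hx => List.eq_of_mem_replicate hx)
    rcases List.eq_nil_or_concat y with hnil | ⟨y', c, hyc⟩
    · exact absurd (hnil ▸ hay) (List.not_mem_nil)
    rw [List.concat_eq_append] at hyc
    subst hyc
    have hSc : ∃ t, S c = t ++ [b] := by
      rcases hcover c with h | h
      · exact h ▸ hlb
      · exact ⟨[], by rw [h, hSb]; rfl⟩
    obtain ⟨t, hSct⟩ := hSc
    have hmem : a ∈ subst S y' ++ S c := by
      have h0 : a ∈ subst S (y' ++ [c]) := List.mem_flatMap.mpr ⟨a, hay, hau⟩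
      rwa [subst_append, show subst S [c] = S c by simp [subst]] at h0
    refine ⟨subst S y' ++ t, ?_, ?_⟩
    · rw [hstep, hy, subst_append, hrep, subst_append,
        show subst S [c] = S c by simp [subst], hSct]
      rw [show (m+1) = m + 1 by rfl, List.replicate_succ]
      simp
    · rcases List.mem_append.mp hmem with h | h
      · exact List.mem_append.mpr (Or.inl h)
      · rw [hSct] at h
        rcases List.mem_append.mp h with h' | h'
        · exact List.mem_append.mpr (Or.inr h')
        · simp at h'
          exact absurd h' hab

theorem not_all_repl [TopologicalSpace A] [DiscreteTopology A]
    (hS : IsSubstSystem S) (hmin : Minimal S) (hab : a ≠ b)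
    (hrepl : ∀ m, List.replicate m b ∈ WS S) : False := by
  have hωb : (fun _ : ℤ => b) ∈ OmegaS S := by
    intro w hw
    obtain ⟨k, hk⟩ := hw
    have hwb : ∀ x ∈ w, x = b := by
      intro x hx
      rw [hk] at hx
      obtain ⟨i, _, hi⟩ := List.mem_map.mp hx
      exact hi.symm
    have hrw : w = List.replicate w.length b := List.eq_replicate_of_mem hwb
    rw [hrw]; exact hrepl _
  have horb : {ω' | ∃ k : ℤ, ω' = shift k (fun _ : ℤ => b)} = {fun _ : ℤ => b} := by
    ext ω'
    simp only [Set.mem_setOf_eq, Set.mem_singleton_iff]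
    constructor
    · rintro ⟨k, rfl⟩; rfl
    · intro h; exact ⟨0, h⟩
  have hsub := hmin _ hωb
  rw [horb, closure_singleton] at hsub
  have haWS : [a] ∈ WS S := ⟨a, 0, by simp [iter]⟩
  rw [hS.2] at haWS
  obtain ⟨ω, hω, k, hk⟩ := haWS
  have hωb' : ω = fun _ => b := hsub hω
  rw [hωb'] at hk
  simp [List.range_succ] at hk
  exact hab hk

theorem u_head_last [TopologicalSpace A] [DiscreteTopology A]
    (hS : IsSubstSystem S) (hmin : Minimal S) (hab : a ≠ b)
    (hcover : ∀ x : A, x = a ∨ x = b) (hSb : S b = [b]) (hSa : 1 < (S a).length) :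
    (S a).getD 0 b = a ∧ (S a).getD ((S a).length - 1) b = a := by
  have hau := a_mem_Sa hS hcover hab hSb
  have hne : S a ≠ [] := by intro h; rw [h] at hSa; simp at hSa
  constructor
  · rcases hcover ((S a).getD 0 b) with h | h
    · exact h
    · exfalso
      obtain ⟨hd, tl, hS2⟩ := List.exists_cons_of_ne_nil hne
      rw [hS2] at h
      simp [List.getD] at h
      apply not_all_repl hS hmin hab
      intro m
      obtain ⟨y, hy, _⟩ := repl_head hab hcover hSb hau ⟨tl, by rw [hS2, h]⟩ m
      exact WS_infix (List.IsPrefix.isInfix ⟨y, hy.symm⟩) (iter_mem_WS S a m)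
  · rcases hcover ((S a).getD ((S a).length - 1) b) with h | h
    · exact h
    · exfalso
      have hlast : (S a).getLast hne = (S a).getD ((S a).length - 1) b := by
        rw [List.getLast_eq_getElem, List.getD_eq_getElem _ b (by omega)]
      have hS2 : S a = (S a).dropLast ++ [b] := by
        conv_lhs => rw [← List.dropLast_append_getLast hne]
        rw [hlast, h]
      apply not_all_repl hS hmin hab
      intro m
      obtain ⟨y, hy, _⟩ := repl_last hab hcover hSb hau ⟨(S a).dropLast, hS2⟩ m
      exact WS_infix (List.IsSuffix.isInfix ⟨y, hy.symm⟩) (iter_mem_WS S a m)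

end PartB


section PartE
variable [DecidableEq A] {S : A → List A} {a b : A}

theorem periodic_mod {w : List A} {q : ℕ} (hq : 1 ≤ q) (b : A)
    (hper : ∀ i, i + q < w.length → w.getD i b = w.getD (i+q) b) :
    ∀ i, i < w.length → w.getD i b = w.getD (i % q) b := by
  intro i
  induction i using Nat.strong_induction_on with
  | _ i ih =>
    intro hi
    rcases Nat.lt_or_ge i q with h | h
    · rw [Nat.mod_eq_of_lt h]
    · have h1 := hper (i - q) (by omega)
      rw [show i - q + q = i by omega] at h1
      have h2 : (i - q) % q = i % q := by
        conv_rhs => rw [show i = i - q + q by omega]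
        rw [Nat.add_mod_right]
      rw [← h2, ← ih (i - q) (by omega) (by omega)]
      exact h1.symm

theorem flatMap_cast (l : List ℕ) :
    (l.flatMap fun (a : ℕ) => ([((a : ℤ))] : List ℤ)) = l.map (Nat.cast : ℕ → ℤ) := by
  induction l with
  | nil => rfl
  | cons c l ih => rw [List.flatMap_cons, List.map_cons, ih]; rfl

theorem getD_factor {A : Type*} (ω : ℤ → A) (k : ℤ) (w' : List A) (b : A)
    (hk : w' = (List.range w'.length).map fun i => ω (k + i)) (j : ℕ) (hj : j < w'.length) :
    w'.getD j b = ω (k + (j:ℤ)) := by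
  have hklen := congrArg List.length hk
  conv_lhs => rw [hk]
  rw [List.getD_eq_getElem _ b (by rw [← hklen]; exact hj)]
  simp
  rw [List.getElem_of_eq (flatMap_cast (List.range w'.length)), List.getElem_map,
    List.getElem_range]

theorem getD_drop_take (v : List A) (b : A) {K L i : ℕ} (hi : i < L) (hKL : K + L ≤ v.length) :
    ((v.drop K).take L).getD i b = v.getD (K + i) b := by
  rw [List.getD_eq_getElem _ b (by simp [List.length_take, List.length_drop]; omega),
      List.getD_eq_getElem _ b (by omega)]
  rw [List.getElem_take, List.getElem_drop]

end PartE

/-- if `aa` does not occur in `S(a)`, there is `L ∈ ℕ` such that all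
1-partitions of any `v ∈ W(S)` induce the same 1-partition on the middle part
`v(L)⋯v(|v|-L)`. -/
theorem statement19 {A : Type*} [Fintype A] [TopologicalSpace A] [DiscreteTopology A]
    (a b : A) (hab : a ≠ b) (hcover : ∀ x : A, x = a ∨ x = b)
    (S : A → List A) (hS : IsSubstSystem S) (hmin : Minimal S) (hap : Aperiodic S)
    (hnp : ¬ Primitive S) (hSa : 1 < (S a).length) (hSb : S b = [b])
    (hnoaa : ¬ ([a, a] <:+: S a)) :
    ∃ L : ℕ, ∀ v ∈ WS S, ∀ (z0 : List A) (zs : List (List A)) (zl : List A)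
        (z0' : List A) (zs' : List (List A)) (zl' : List A),
      IsOnePart S a b v z0 zs zl → IsOnePart S a b v z0' zs' zl' →
      ∀ p : ℕ, L ≤ p → p + L ≤ v.length → (p ∈ cuts z0 zs ↔ p ∈ cuts z0' zs') := by
  classical
  by_contra hcon
  push_neg at hcon
  have hn1 : 1 ≤ (S a).length := by omega
  have hNAu : (S a).Chain' (fun x y => ¬(x = a ∧ y = a)) := NA_of_not_infix hnoaa
  obtain ⟨hu0, hun⟩ := u_head_last hS hmin hab hcover hSb hSa
  have hn3 : 3 ≤ (S a).length := by
    rcases Nat.lt_or_ge (S a).length 3 with h | h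
    · exfalso
      apply NA_getD hab hNAu (i := 0)
      · exact hu0
      · rw [show (0:ℕ) + 1 = (S a).length - 1 by omega]; exact hun
    · exact h
  -- step 1: arbitrarily long periodic words in WS S
  have hmain : ∀ m : ℕ, ∃ (q : ℕ) (r : List A), 1 ≤ q ∧ q ≤ 2*(S a).length ∧ r.length ≤ 2*(S a).length ∧
      ∃ w, w ∈ WS S ∧ m ≤ w.length ∧
        (∀ i, i < w.length → w.getD i b = r.getD (i % q) b) := by
    intro m
    obtain ⟨v, hv, z0, zs, zl, z0', zs', zl', hP1, hP2, p, hp1, hp2, hpne⟩ :=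
      hcon (m + 17*(S a).length)
    have hNAv := NA_WS hab hcover hSb hn1 hNAu hv
    have hkey : ∃ q, 1 ≤ q ∧ q ≤ 2*(S a).length ∧ ∀ x, 8*(S a).length ≤ x →
        x + q + 8*(S a).length ≤ v.length → v.getD x b = v.getD (x + q) b := by
      rcases hpne with ⟨hc, hc'⟩ | ⟨hc, hc'⟩
      · exact main' hP1 hP2 hab hcover hn3 hu0 hun hNAv (by omega) (by omega) hc hc'
      · exact main' hP2 hP1 hab hcover hn3 hu0 hun hNAv (by omega) (by omega) hc' hc
    obtain ⟨q, hq1, hq2, hper⟩ := hkey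
    have hvlen : 2*(m + 17*(S a).length) ≤ v.length := by omega
    set w : List A := (v.drop (8*(S a).length)).take (v.length - 16*(S a).length) with hwdef
    have hwlen : w.length = v.length - 16*(S a).length := by
      rw [hwdef]; simp [List.length_take, List.length_drop]; omega
    have hwgetD : ∀ i, i < v.length - 16*(S a).length →
        w.getD i b = v.getD (8*(S a).length + i) b := by
      intro i hi
      rw [hwdef]
      exact getD_drop_take v b hi (by omega)
    have hwper : ∀ i, i + q < w.length → w.getD i b = w.getD (i+q) b := by
      intro i hi
      rw [hwlen] at hi
      rw [hwgetD i (by omega), hwgetD (i+q) hi,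
        show 8*(S a).length + (i + q) = (8*(S a).length + i) + q by omega]
      exact hper (8*(S a).length + i) (by omega) (by omega)
    have hmod := periodic_mod hq1 b hwper
    refine ⟨q, w.take q, hq1, hq2, by simp [List.length_take]; omega, w, ?_, ?_, ?_⟩
    · rw [hwdef]
      apply WS_infix _ hv
      exact (List.take_prefix _ _).isInfix.trans (List.drop_suffix _ _).isInfix
    · omega
    · intro i hi
      rw [hmod i hi]
      have hiq : i % q < q := Nat.mod_lt _ (by omega)
      have htp : w.take q <+: w := List.take_prefix q w
      have hlt : i % q < (w.take q).length := by
        rw [List.length_take]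
        omega
      exact IsPrefix.getD' htp hlt b
  -- step 2: pigeonhole
  choose Fq Fr hF1 hF2 hF3 hFw using hmain
  set Tset : Set (ℕ × List A) :=
    {qr | qr.1 ≤ 2*(S a).length ∧ qr.2.length ≤ 2*(S a).length} with hTdef
  have hfin : Tset.Finite := by
    apply Set.Finite.subset (Set.Finite.prod (Set.finite_Iic (2*(S a).length))
      (List.finite_length_le A (2*(S a).length)))
    rintro ⟨q, r⟩ ⟨ha1, ha2⟩
    exact ⟨ha1, ha2⟩
  haveI := hfin.to_subtype
  obtain ⟨t, ht⟩ := Finite.exists_infinite_fiber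
    (fun m => (⟨(Fq m, Fr m), show (Fq m, Fr m) ∈ Tset from ⟨hF2 m, hF3 m⟩⟩ : ↥Tset))
  have hinf := Set.infinite_coe_iff.mp ht
  have hq1 : 1 ≤ t.val.1 := by
    obtain ⟨m, hm⟩ := hinf.nonempty
    have hm' : (⟨(Fq m, Fr m), show (Fq m, Fr m) ∈ Tset from ⟨hF2 m, hF3 m⟩⟩ : ↥Tset) = t := hm
    have he : Fq m = t.val.1 := congrArg (fun x => x.val.1) hm'
    rw [← he]; exact hF1 m
  have hqZ : (0:ℤ) < (t.val.1 : ℤ) := by exact_mod_cast hq1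
  have hshift : shift (t.val.1 : ℤ)
      (fun z => t.val.2.getD ((z % (t.val.1 : ℤ)).toNat) b)
      = (fun z => t.val.2.getD ((z % (t.val.1 : ℤ)).toNat) b) := by
    funext z
    show t.val.2.getD (((z + (t.val.1:ℤ)) % (t.val.1:ℤ)).toNat) b = _
    rw [show z + (t.val.1:ℤ) = z + (t.val.1:ℤ)*1 by ring, Int.add_mul_emod_self_left]
  have hmem : (fun z => t.val.2.getD ((z % (t.val.1 : ℤ)).toNat) b) ∈ OmegaS S := by
    intro w' hw'
    obtain ⟨k, hk⟩ := hw'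
    obtain ⟨m, hm1, hm2⟩ := hinf.exists_gt (w'.length + 2*(S a).length)
    have hm' : (⟨(Fq m, Fr m), show (Fq m, Fr m) ∈ Tset from ⟨hF2 m, hF3 m⟩⟩ : ↥Tset) = t := hm1
    have eq1 : Fq m = t.val.1 := congrArg (fun x => x.val.1) hm'
    have eq2 : Fr m = t.val.2 := congrArg (fun x => x.val.2) hm'
    obtain ⟨w, hwW, hwm, hwmod⟩ := hFw m
    rw [eq1] at hwmod
    rw [eq2] at hwmod
    have hq2' : t.val.1 ≤ 2*(S a).length := by rw [← eq1]; exact hF2 m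
    have hs0 : 0 ≤ k % (t.val.1:ℤ) := Int.emod_nonneg k (by omega)
    have hs1 : k % (t.val.1:ℤ) < (t.val.1:ℤ) := Int.emod_lt_of_pos k hqZ
    have hsq : (k % (t.val.1:ℤ)).toNat < t.val.1 := by omega
    have key : ∀ j : ℕ, j < w'.length →
        w'.getD j b = w.getD ((k % (t.val.1:ℤ)).toNat + j) b := by
      intro j hj
      have e1 : w'.getD j b = (fun z => t.val.2.getD ((z % (t.val.1 : ℤ)).toNat) b) (k + (j:ℤ)) :=
        getD_factor (fun z => t.val.2.getD ((z % (t.val.1 : ℤ)).toNat) b) k w' b (by exact hk) j hj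
      have e2 : ((k + (j:ℤ)) % (t.val.1:ℤ)).toNat = ((k % (t.val.1:ℤ)).toNat + j) % t.val.1 := by
        have h1 : (k + (j:ℤ)) % (t.val.1:ℤ) = ((k % (t.val.1:ℤ)) + (j:ℤ)) % (t.val.1:ℤ) := by
          conv_lhs => rw [← Int.mul_ediv_add_emod k (t.val.1:ℤ)]
          rw [show (t.val.1:ℤ) * (k / (t.val.1:ℤ)) + k % (t.val.1:ℤ) + (j:ℤ)
              = k % (t.val.1:ℤ) + (j:ℤ) + (t.val.1:ℤ) * (k / (t.val.1:ℤ)) by ring]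
          rw [Int.add_mul_emod_self_left]
        have h2 : k % (t.val.1:ℤ) = ((k % (t.val.1:ℤ)).toNat : ℤ) := by omega
        rw [h1]
        conv_lhs => rw [h2]
        rw [show (((k % (t.val.1:ℤ)).toNat : ℤ) + (j:ℤ))
            = (((k % (t.val.1:ℤ)).toNat + j : ℕ) : ℤ) by push_cast; ring]
        rw [← Int.natCast_mod, Int.toNat_natCast]
      have e4 := hwmod ((k % (t.val.1:ℤ)).toNat + j) (by omega)
      rw [e1]
      show t.val.2.getD (((k + (j:ℤ)) % (t.val.1:ℤ)).toNat) b = _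
      rw [e2, e4]
    have hw'eq : w' = (w.drop ((k % (t.val.1:ℤ)).toNat)).take w'.length := by
      apply List.ext_getElem
      · simp [List.length_take, List.length_drop]
        omega
      · intro j h1 h2
        have e3 := key j h1
        rw [List.getD_eq_getElem _ b h1, List.getD_eq_getElem _ b (by omega)] at e3
        rw [e3, List.getElem_take, List.getElem_drop]
    rw [hw'eq]
    exact WS_infix ((List.take_prefix _ _).isInfix.trans (List.drop_suffix _ _).isInfix) hwW
  exact hap _ hmem (t.val.1:ℤ) (by omega) hshift


end SubstLR
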